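/- In the monoid ℛ_n with generators s_1,...,s_{n-1} (the simple transpositions) and e_{k_1,...,k_{m-1}} (standard interval-partition idempotents), the relation e_{k_1,...,k_{m-1}} s_i = s_i e_{k_1,...,k_{m-1}} holds whenever i and i+1 lie in the same block {k_{j-1}+1,...,k_j} of the interval partition. -/

import Mathlib

/-- `l` is an ordered set partition of `{0,...,n-1}`: a list of pairwise disjoint
nonempty blocks whose union is everything. -/
def IsOSP (n : ℕ) (l : List (Finset (Fin n))) : Prop :=
  (∀ b ∈ l, b ≠ ∅) ∧ l.Pairwise Disjoint ∧ l.foldr (· ∪ ·) ∅ = Finset.univ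

/-- Intersection product of ordered set partitions: list the nonempty
intersections `p_i ∩ q_j`, ordered first by `j` then by `i`. -/
def ospMul (n : ℕ) (p q : List (Finset (Fin n))) : List (Finset (Fin n)) :=
  (q.flatMap (fun b => p.map (fun a => a ∩ b))).filter (fun a => a ≠ ∅)

/-- Blockwise application of a permutation to an ordered set partition. -/
def permAct (n : ℕ) (σ : Equiv.Perm (Fin n)) (p : List (Finset (Fin n))) :
    List (Finset (Fin n)) :=
  p.map (fun b => b.image σ)

/-- The PM-monoid product: `(σ,p)·(τ,q) = (στ, τ⁻¹(p) * q)`. -/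
def pmMul (n : ℕ) (x y : Equiv.Perm (Fin n) × List (Finset (Fin n))) :
    Equiv.Perm (Fin n) × List (Finset (Fin n)) :=
  (x.1 * y.1, ospMul n (permAct n y.1⁻¹ x.2) y.2)

/-- The identity element `(id, ({1,...,n}))` of the PM-monoid. -/
def pmId (n : ℕ) : Equiv.Perm (Fin n) × List (Finset (Fin n)) :=
  ((1 : Equiv.Perm (Fin n)), [(Finset.univ : Finset (Fin n))])

/-- `x* = (σ⁻¹, σ(p))`. -/
def pmStar (n : ℕ) (x : Equiv.Perm (Fin n) × List (Finset (Fin n))) :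
    Equiv.Perm (Fin n) × List (Finset (Fin n)) :=
  (x.1⁻¹, permAct n x.1 x.2)

/-- Stirling numbers of the second kind. -/
def stirling2 : ℕ → ℕ → ℕ
  | 0, 0 => 1
  | 0, _ + 1 => 0
  | _ + 1, 0 => 0
  | n + 1, m + 1 => (m + 1) * stirling2 n (m + 1) + stirling2 n m

/-- Interval ordered set partition: blocks are consecutive intervals in increasing order. -/
def IsIntervalOSP (n : ℕ) (l : List (Finset (Fin n))) : Prop :=
  IsOSP n l ∧ l.Pairwise (fun a b => ∀ x ∈ a, ∀ y ∈ b, x < y)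

/-- `e_{k₁,...,k_{m-1}} s_i = s_i e_{k₁,...,k_{m-1}}` whenever `i` and
`i+1` lie in the same block of the interval partition. -/
theorem stmt13 (n : ℕ) (hn : 1 ≤ n) (p : List (Finset (Fin n)))
    (hp : IsIntervalOSP n p) (i j : Fin n) (hij : (j : ℕ) = (i : ℕ) + 1)
    (b : Finset (Fin n)) (hb : b ∈ p) (hi : i ∈ b) (hj : j ∈ b) :
    pmMul n ((1, p) : Equiv.Perm (Fin n) × List (Finset (Fin n)))
        (Equiv.swap i j, [Finset.univ]) =
      pmMul n (Equiv.swap i j, [Finset.univ]) (1, p) := by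
  obtain ⟨⟨hne, hdisj, _⟩, _⟩ := hp
  have hij' : i ≠ j := by
    intro h; rw [h] at hij; omega
  have key : ∀ c ∈ p, c.image (Equiv.swap i j) = c := by
    intro c hc
    have hiff : ∀ x : Fin n, Equiv.swap i j x ∈ c ↔ x ∈ c := by
      intro x
      by_cases hcb : c = b
      · subst hcb
        rcases eq_or_ne x i with rfl | hxi
        · simp [Equiv.swap_apply_left, hi, hj]
        rcases eq_or_ne x j with rfl | hxj
        · simp [Equiv.swap_apply_right, hi, hj]
        · rw [Equiv.swap_apply_of_ne_of_ne hxi hxj]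
      · have hd : Disjoint c b :=
          hdisj.forall hc hb hcb
        have hic : i ∉ c := fun h => hcb (False.elim (Finset.disjoint_left.mp hd h hi))
        have hjc : j ∉ c := fun h => hcb (False.elim (Finset.disjoint_left.mp hd h hj))
        rcases eq_or_ne x i with rfl | hxi
        · simp [Equiv.swap_apply_left, hic, hjc]
        rcases eq_or_ne x j with rfl | hxj
        · simp [Equiv.swap_apply_right, hic, hjc]
        · rw [Equiv.swap_apply_of_ne_of_ne hxi hxj]
    ext x
    simp only [Finset.mem_image]
    constructor
    · rintro ⟨y, hy, rfl⟩; exact (hiff y).mpr hy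
    · intro hx
      exact ⟨Equiv.swap i j x, (hiff x).mpr hx, by simp⟩
  have hflat : ∀ (g : Finset (Fin n) → Finset (Fin n)) (l : List (Finset (Fin n))),
      (l.flatMap fun b => [g b]) = l.map g := by
    intro g l
    induction l with
    | nil => rfl
    | cons a l ih => simp [List.flatMap_cons, ih]
  have hfilter : p.filter (fun a => a ≠ ∅) = p :=
    List.filter_eq_self.mpr fun a ha => by simpa using hne a ha
  simp only [pmMul, ospMul, permAct, Prod.mk.injEq, one_mul, mul_one,
    Equiv.swap_inv, List.flatMap_cons, List.flatMap_nil, List.append_nil,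
    List.map_map, Equiv.Perm.one_def, inv_one]
  refine ⟨rfl, ?_⟩
  have h1 : List.map ((fun a => a ∩ Finset.univ) ∘ fun c => Finset.image (⇑(Equiv.swap i j)) c) p = p := by
    rw [← List.map_map]
    simp only [Finset.inter_univ, List.map_id']
    refine List.map_congr_left (fun c hc => key c hc) |>.trans (List.map_id p)
  have h2 : (p.flatMap fun b => List.map ((fun a => a ∩ b) ∘ fun c => Finset.image (⇑(Equiv.refl (Fin n))⁻¹) c) [Finset.univ]) = p := by
    simp only [List.map_cons, List.map_nil, Function.comp]
    rw [hflat]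
    refine (List.map_congr_left (fun c _ => by simp)).trans (List.map_id p)
  rw [h1, h2, hfilter]
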